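/- Let G = (V,E;w) be a finite simple undirected connected graph with at least two vertices and positive vertex weights. Then the bottleneck decomposition of G exists and is unique: there is exactly one finite sequence {(B_1,C_1),…,(B_k,C_k)} such that, setting V_1 = V and V_{i+1} = V_i ∖ (B_i ∪ C_i), for every i ∈ {1,…,k} the induced subgraph G[V_i] is nonempty and has no isolated vertices, B_i is the unique maximal bottleneck of G[V_i], C_i = Γ_{G[V_i]}(B_i), and V_{k+1} = ∅. -/

import Mathlib

open Finset

/-- The total weight of a finite set of vertices. -/
def wsum {V : Type*} (w : V → ℝ) (S : Finset V) : ℝ := ∑ v ∈ S, w v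

/-- The neighborhood of `S` inside the induced subgraph on `A`: all vertices of `A` adjacent
to at least one vertex of `S`. -/
def nbhdIn {V : Type*} [DecidableEq V] (G : SimpleGraph V) [DecidableRel G.Adj]
    (A S : Finset V) : Finset V :=
  A.filter fun v => ∃ u ∈ S, G.Adj u v

/-- The α-ratio of `S` computed inside the induced subgraph on `A`. -/
noncomputable def alphaIn {V : Type*} [DecidableEq V] (G : SimpleGraph V)
    [DecidableRel G.Adj] (w : V → ℝ) (A S : Finset V) : ℝ :=
  wsum w (nbhdIn G A S) / wsum w S

/-- `B` is the maximal bottleneck of the induced subgraph `G[A]`: it is a nonempty subset of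
`A` of minimal α-ratio (within `G[A]`) and every strictly larger subset of `A` has strictly
larger α-ratio. -/
def IsMaxBottleneckIn {V : Type*} [DecidableEq V] (G : SimpleGraph V) [DecidableRel G.Adj]
    (w : V → ℝ) (A B : Finset V) : Prop :=
  B.Nonempty ∧ B ⊆ A ∧
    (∀ S : Finset V, S.Nonempty → S ⊆ A → alphaIn G w A B ≤ alphaIn G w A S) ∧
    ∀ B' : Finset V, B ⊂ B' → B' ⊆ A → alphaIn G w A B < alphaIn G w A B'


/-- `(B, C)` (a sequence of `k` pairs of vertex sets) is the bottleneck decomposition of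
`G`: setting `V_1 = V` and `V_{i+1} = V_i ∖ (B_i ∪ C_i)`, for every `i` the induced
subgraph `G[V_i]` is nonempty and has no isolated vertices, `B_i` is the unique maximal
bottleneck of `G[V_i]`, `C_i = Γ_{G[V_i]}(B_i)`, and `V_{k+1} = ∅`. -/
def IsBottleneckDecomposition {V : Type*} [Fintype V] [DecidableEq V] (G : SimpleGraph V)
    [DecidableRel G.Adj] (w : V → ℝ) (k : ℕ) (B C : Fin k → Finset V) : Prop :=
  ∃ Vs : Fin (k + 1) → Finset V,
    Vs 0 = univ ∧
    (∀ i : Fin k, Vs i.succ = Vs i.castSucc \ (B i ∪ C i)) ∧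
    (∀ i : Fin k,
      (Vs i.castSucc).Nonempty ∧
      (∀ x ∈ Vs i.castSucc, ∃ y ∈ Vs i.castSucc, G.Adj x y) ∧
      IsMaxBottleneckIn G w (Vs i.castSucc) (B i) ∧
      (∀ B' : Finset V, IsMaxBottleneckIn G w (Vs i.castSucc) B' → B' = B i) ∧
      C i = nbhdIn G (Vs i.castSucc) (B i)) ∧
    Vs (Fin.last k) = ∅

section Aux
variable {V : Type*} [DecidableEq V] (G : SimpleGraph V) [DecidableRel G.Adj]
  (w : V → ℝ)

lemma wsum_pos (hw : ∀ v, 0 < w v) {S : Finset V} (hS : S.Nonempty) : 0 < wsum w S :=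
  Finset.sum_pos (fun i _ => hw i) hS

lemma wsum_nonneg (hw : ∀ v, 0 < w v) (S : Finset V) : 0 ≤ wsum w S :=
  Finset.sum_nonneg (fun i _ => (hw i).le)

lemma wsum_mono (hw : ∀ v, 0 < w v) {S T : Finset V} (h : S ⊆ T) : wsum w S ≤ wsum w T :=
  Finset.sum_le_sum_of_subset_of_nonneg h (fun i _ _ => (hw i).le)

lemma nbhdIn_union (A S T : Finset V) :
    nbhdIn G A (S ∪ T) = nbhdIn G A S ∪ nbhdIn G A T := by
  ext v
  simp only [nbhdIn, mem_filter, mem_union]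
  constructor
  · rintro ⟨hA, u, hu | hu, hadj⟩
    · exact Or.inl ⟨hA, u, hu, hadj⟩
    · exact Or.inr ⟨hA, u, hu, hadj⟩
  · rintro (⟨hA, u, hu, hadj⟩ | ⟨hA, u, hu, hadj⟩)
    · exact ⟨hA, u, Or.inl hu, hadj⟩
    · exact ⟨hA, u, Or.inr hu, hadj⟩

lemma nbhdIn_inter_subset (A S T : Finset V) :
    nbhdIn G A (S ∩ T) ⊆ nbhdIn G A S ∩ nbhdIn G A T := by
  intro v
  simp only [nbhdIn, mem_filter, mem_inter, mem_inter]
  rintro ⟨hA, u, hu, hadj⟩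
  exact ⟨⟨hA, u, hu.1, hadj⟩, hA, u, hu.2, hadj⟩

lemma alphaIn_le_iff (hw : ∀ v, 0 < w v) {A S : Finset V} (hS : S.Nonempty) (m : ℝ) :
    alphaIn G w A S ≤ m ↔ wsum w (nbhdIn G A S) ≤ m * wsum w S := by
  rw [alphaIn, div_le_iff₀ (wsum_pos w hw hS)]

lemma le_alphaIn_iff (hw : ∀ v, 0 < w v) {A S : Finset V} (hS : S.Nonempty) (m : ℝ) :
    m ≤ alphaIn G w A S ↔ m * wsum w S ≤ wsum w (nbhdIn G A S) := by
  rw [alphaIn, le_div_iff₀ (wsum_pos w hw hS)]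

/-- If S and T both attain the minimum ratio m, so does S ∪ T. -/
lemma alphaIn_union_le (hw : ∀ v, 0 < w v) {A S T : Finset V} {m : ℝ}
    (hS : S.Nonempty) (hT : T.Nonempty) (hS2 : S ⊆ A) (hT2 : T ⊆ A)
    (hmin : ∀ X : Finset V, X.Nonempty → X ⊆ A → m ≤ alphaIn G w A X)
    (hSa : alphaIn G w A S = m) (hTa : alphaIn G w A T = m) :
    alphaIn G w A (S ∪ T) = m := by
  have hST : (S ∪ T).Nonempty := hS.mono subset_union_left
  refine le_antisymm ?_ (hmin _ hST (union_subset hS2 hT2))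
  rw [alphaIn_le_iff G w hw hST]
  have h1 : wsum w (nbhdIn G A (S ∪ T)) + wsum w (nbhdIn G A (S ∩ T))
      ≤ wsum w (nbhdIn G A S) + wsum w (nbhdIn G A T) := by
    rw [nbhdIn_union]
    have : ∑ v ∈ nbhdIn G A S ∪ nbhdIn G A T, w v + ∑ v ∈ nbhdIn G A S ∩ nbhdIn G A T, w v
        = ∑ v ∈ nbhdIn G A S, w v + ∑ v ∈ nbhdIn G A T, w v := Finset.sum_union_inter
    have h2 : wsum w (nbhdIn G A (S ∩ T)) ≤ wsum w (nbhdIn G A S ∩ nbhdIn G A T) :=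
      wsum_mono w hw (nbhdIn_inter_subset G A S T)
    unfold wsum at *
    linarith
  have hSm : wsum w (nbhdIn G A S) = m * wsum w S := by
    have := hSa; rw [alphaIn, div_eq_iff (wsum_pos w hw hS).ne'] at this; exact this
  have hTm : wsum w (nbhdIn G A T) = m * wsum w T := by
    have := hTa; rw [alphaIn, div_eq_iff (wsum_pos w hw hT).ne'] at this; exact this
  have hInter : m * wsum w (S ∩ T) ≤ wsum w (nbhdIn G A (S ∩ T)) := by
    rcases (S ∩ T).eq_empty_or_nonempty with h | h
    · simp [h, nbhdIn, wsum]
    · exact (le_alphaIn_iff G w hw h m).mp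
        (hmin _ h ((inter_subset_left).trans hS2))
  have hw2 : wsum w (S ∪ T) + wsum w (S ∩ T) = wsum w S + wsum w T :=
    Finset.sum_union_inter
  have hm2 : m * wsum w (S ∪ T) + m * wsum w (S ∩ T) = m * wsum w S + m * wsum w T := by
    rw [← mul_add, hw2, mul_add]
  linarith
end Aux

section Aux2
variable {V : Type*} [DecidableEq V] (G : SimpleGraph V) [DecidableRel G.Adj]
  (w : V → ℝ)


lemma exists_maxBottleneck (hw : ∀ v, 0 < w v) {A : Finset V} (hA : A.Nonempty) :
    ∃ B, IsMaxBottleneckIn G w A B := by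
  classical
  set 𝒮 : Finset (Finset V) := A.powerset.filter (fun S => S.Nonempty) with h𝒮
  have h𝒮mem : ∀ S : Finset V, S ∈ 𝒮 ↔ S.Nonempty ∧ S ⊆ A := by
    intro S; simp [h𝒮, Finset.mem_filter, Finset.mem_powerset, and_comm]
  have h𝒮ne : 𝒮.Nonempty := ⟨A, (h𝒮mem A).mpr ⟨hA, le_refl A⟩⟩
  obtain ⟨M, hM𝒮, hMmin⟩ := Finset.exists_min_image 𝒮 (alphaIn G w A) h𝒮ne
  set m := alphaIn G w A M with hm
  have hmin : ∀ S : Finset V, S.Nonempty → S ⊆ A → m ≤ alphaIn G w A S := by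
    intro S h1 h2; exact hMmin S ((h𝒮mem S).mpr ⟨h1, h2⟩)
  set ℳ : Finset (Finset V) := 𝒮.filter (fun S => alphaIn G w A S = m) with hℳ
  have hℳne : ℳ.Nonempty := ⟨M, Finset.mem_filter.mpr ⟨hM𝒮, rfl⟩⟩
  obtain ⟨B, hBℳ, hBmax⟩ := Finset.exists_max_image ℳ Finset.card hℳne
  have hBm : alphaIn G w A B = m := (Finset.mem_filter.mp hBℳ).2
  obtain ⟨hBne, hBA⟩ := (h𝒮mem B).mp (Finset.mem_filter.mp hBℳ).1
  have hsub : ∀ S : Finset V, S.Nonempty → S ⊆ A → alphaIn G w A S = m → S ⊆ B := by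
    intro S h1 h2 h3
    have hU : alphaIn G w A (S ∪ B) = m :=
      alphaIn_union_le G w hw h1 hBne h2 hBA hmin h3 hBm
    have hUℳ : S ∪ B ∈ ℳ := Finset.mem_filter.mpr
      ⟨(h𝒮mem _).mpr ⟨h1.mono subset_union_left, union_subset h2 hBA⟩, hU⟩
    have hcard := hBmax _ hUℳ
    have : S ∪ B ⊆ B := by
      by_contra hcon
      have h5 : B ⊂ S ∪ B := ssubset_of_subset_of_ne subset_union_right
        (fun h => hcon (le_of_eq h.symm))
      exact absurd hcard (not_le.mpr (Finset.card_lt_card h5))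
    exact subset_union_left.trans this
  refine ⟨B, hBne, hBA, ?_, ?_⟩
  · intro S h1 h2; rw [hBm]; exact hmin S h1 h2
  · intro B' hlt hB'A
    have hB'ne : B'.Nonempty := hBne.mono hlt.subset
    rcases lt_or_eq_of_le (hmin B' hB'ne hB'A) with h | h
    · rw [hBm]; exact h
    · exact absurd (hsub B' hB'ne hB'A h.symm) (fun hc => hlt.not_subset hc)

lemma maxBottleneck_unique (hw : ∀ v, 0 < w v) {A B₁ B₂ : Finset V}
    (h1 : IsMaxBottleneckIn G w A B₁) (h2 : IsMaxBottleneckIn G w A B₂) : B₁ = B₂ := by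
  obtain ⟨h1ne, h1A, h1min, h1max⟩ := h1
  obtain ⟨h2ne, h2A, h2min, h2max⟩ := h2
  have heq : alphaIn G w A B₁ = alphaIn G w A B₂ :=
    le_antisymm (h1min _ h2ne h2A) (h2min _ h1ne h1A)
  have key : ∀ (B₁ B₂ : Finset V), B₁.Nonempty → B₂.Nonempty → B₁ ⊆ A → B₂ ⊆ A →
      (∀ S : Finset V, S.Nonempty → S ⊆ A → alphaIn G w A B₁ ≤ alphaIn G w A S) →
      (∀ B' : Finset V, B₁ ⊂ B' → B' ⊆ A → alphaIn G w A B₁ < alphaIn G w A B') →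
      alphaIn G w A B₁ = alphaIn G w A B₂ → B₂ ⊆ B₁ := by
    intro B₁ B₂ h1ne h2ne h1A h2A h1min h1max heq
    have hU : alphaIn G w A (B₁ ∪ B₂) = alphaIn G w A B₁ :=
      alphaIn_union_le G w hw h1ne h2ne h1A h2A h1min rfl heq.symm
    by_contra hcon
    have hss : B₁ ⊂ B₁ ∪ B₂ := ssubset_of_subset_of_ne subset_union_left
      (fun h => hcon (subset_union_right.trans (le_of_eq h.symm)))
    exact absurd (h1max _ hss (union_subset h1A h2A)) (by rw [hU]; exact lt_irrefl _)
  exact le_antisymm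
    (key B₂ B₁ h2ne h1ne h2A h1A h2min h2max heq.symm)
    (key B₁ B₂ h1ne h2ne h1A h2A h1min h1max heq)

lemma step_no_isolated (hw : ∀ v, 0 < w v) {A B : Finset V}
    (hB : IsMaxBottleneckIn G w A B)
    (hiso : ∀ x ∈ A, ∃ y ∈ A, G.Adj x y) :
    ∀ x ∈ A \ (B ∪ nbhdIn G A B), ∃ y ∈ A \ (B ∪ nbhdIn G A B), G.Adj x y := by
  obtain ⟨hBne, hBA, hBmin, hBmax⟩ := hB
  set C := nbhdIn G A B with hC
  intro x hx
  rw [Finset.mem_sdiff, Finset.mem_union, not_or] at hx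
  obtain ⟨hxA, hxB, hxC⟩ := hx
  by_contra hcon
  push_neg at hcon
  -- every neighbor of x inside A lies in C
  have hnbr : ∀ y ∈ A, G.Adj x y → y ∈ C := by
    intro y hyA hadj
    by_contra hyC
    have hyB : y ∉ B := by
      intro hyB
      exact hxC (Finset.mem_filter.mpr ⟨hxA, y, hyB, hadj.symm⟩)
    exact hcon y (Finset.mem_sdiff.mpr ⟨hyA, by
      rw [Finset.mem_union, not_or]; exact ⟨hyB, hyC⟩⟩) hadj
  -- then insert x B is a bigger set with no bigger neighborhood
  have hsub : nbhdIn G A (insert x B) ⊆ C := by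
    intro v hv
    rw [nbhdIn, Finset.mem_filter] at hv
    obtain ⟨hvA, u, hu, hadj⟩ := hv
    rcases Finset.mem_insert.mp hu with rfl | huB
    · exact hnbr v hvA hadj
    · exact Finset.mem_filter.mpr ⟨hvA, u, huB, hadj⟩
  have hBx : B ⊂ insert x B := Finset.ssubset_insert hxB
  have hlt := hBmax _ hBx (Finset.insert_subset hxA hBA)
  have hwB : 0 < wsum w B := wsum_pos w hw hBne
  have hwB' : wsum w B < wsum w (insert x B) := by
    have hx := hw x
    rw [wsum, wsum, Finset.sum_insert hxB]
    linarith
  have hle : alphaIn G w A (insert x B) ≤ alphaIn G w A B := by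
    rw [alphaIn, alphaIn]
    calc wsum w (nbhdIn G A (insert x B)) / wsum w (insert x B)
        ≤ wsum w C / wsum w (insert x B) :=
          div_le_div_of_nonneg_right (wsum_mono w hw hsub)
            (wsum_pos w hw (Finset.insert_nonempty x B)).le
      _ ≤ wsum w C / wsum w B :=
          div_le_div_of_nonneg_left (wsum_nonneg w hw C) hwB hwB'.le
  exact absurd hlt (not_lt.mpr hle)

end Aux2

section Aux3
variable {V : Type*} [DecidableEq V] (G : SimpleGraph V) [DecidableRel G.Adj]
  (w : V → ℝ)

lemma exists_partial (hw : ∀ v, 0 < w v) (A : Finset V) :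
    (∀ x ∈ A, ∃ y ∈ A, G.Adj x y) →
    ∃ (k : ℕ) (B C : Fin k → Finset V) (Vs : Fin (k+1) → Finset V),
      Vs 0 = A ∧
      (∀ i : Fin k, Vs i.succ = Vs i.castSucc \ (B i ∪ C i)) ∧
      (∀ i : Fin k,
        (Vs i.castSucc).Nonempty ∧
        (∀ x ∈ Vs i.castSucc, ∃ y ∈ Vs i.castSucc, G.Adj x y) ∧
        IsMaxBottleneckIn G w (Vs i.castSucc) (B i) ∧
        (∀ B' : Finset V, IsMaxBottleneckIn G w (Vs i.castSucc) B' → B' = B i) ∧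
        C i = nbhdIn G (Vs i.castSucc) (B i)) ∧
      Vs (Fin.last k) = ∅ := by
  classical
  induction A using Finset.strongInduction with
  | _ A ih =>
    intro hiso
    rcases A.eq_empty_or_nonempty with rfl | hA
    · exact ⟨0, Fin.elim0, Fin.elim0, fun _ => ∅, rfl, fun i => i.elim0,
        fun i => i.elim0, rfl⟩
    · obtain ⟨B₀, hB₀⟩ := exists_maxBottleneck G w hw hA
      set C₀ := nbhdIn G A B₀ with hC₀
      set A' := A \ (B₀ ∪ C₀) with hA'
      have hBCsub : B₀ ∪ C₀ ⊆ A :=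
        union_subset hB₀.2.1 (Finset.filter_subset _ _)
      have hss : A' ⊂ A :=
        Finset.sdiff_ssubset hBCsub (hB₀.1.mono subset_union_left)
      have hiso' := step_no_isolated G w hw hB₀ hiso
      obtain ⟨k, B, C, Vs, hV0, hVrec, hconds, hVlast⟩ := ih A' hss hiso'
      refine ⟨k+1, Fin.cons B₀ B, Fin.cons C₀ C, Fin.cons A Vs, rfl, ?_, ?_, ?_⟩
      · intro i
        induction i using Fin.cases with
        | zero =>
          simp only [Fin.cons_succ, Fin.castSucc_zero, Fin.cons_zero]
          exact hV0
        | succ j =>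
          rw [← Fin.succ_castSucc]
          simp only [Fin.cons_succ]
          exact hVrec j
      · intro i
        induction i using Fin.cases with
        | zero =>
          simp only [Fin.castSucc_zero, Fin.cons_zero]
          exact ⟨hA, hiso, hB₀, fun B' h => maxBottleneck_unique G w hw h hB₀, hC₀⟩
        | succ j =>
          rw [← Fin.succ_castSucc]
          simp only [Fin.cons_succ]
          exact hconds j
      · rw [← Fin.succ_last, Fin.cons_succ]
        exact hVlast

end Aux3

/-- every connected graph with at least two vertices and positive vertex
weights has exactly one bottleneck decomposition. -/
theorem bottleneck_decomposition_exists_unique {V : Type*} [Fintype V] [DecidableEq V]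
    (G : SimpleGraph V) [DecidableRel G.Adj] (w : V → ℝ)
    (hw : ∀ v, 0 < w v) (hconn : G.Connected) (hcard : 2 ≤ Fintype.card V) :
    ∃! d : (k : ℕ) × ((Fin k → Finset V) × (Fin k → Finset V)),
      IsBottleneckDecomposition G w d.1 d.2.1 d.2.2 := by
  classical
  have hiso : ∀ x ∈ (univ : Finset V), ∃ y ∈ (univ : Finset V), G.Adj x y := by
    intro x _
    obtain ⟨y, hy⟩ := Fintype.exists_ne_of_one_lt_card (by omega) x
    obtain ⟨p⟩ := hconn.preconnected x y
    cases p with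
    | nil => exact absurd rfl hy
    | cons h q => exact ⟨_, mem_univ _, h⟩
  obtain ⟨k, B, C, Vs, hV0, hVrec, hconds, hVlast⟩ := exists_partial G w hw univ hiso
  refine ⟨⟨k, B, C⟩, ⟨Vs, hV0, hVrec, hconds, hVlast⟩, ?_⟩
  rintro ⟨k', B', C'⟩ hd
  simp only [IsBottleneckDecomposition] at hd
  obtain ⟨Vs', hV0', hVrec', hconds', hVlast'⟩ := hd
  have agree : ∀ n (hn' : n < k' + 1) (hn : n < k + 1),
      Vs' ⟨n, hn'⟩ = Vs ⟨n, hn⟩ := by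
    intro n
    induction n with
    | zero =>
      intro hn' hn
      have e1 : (⟨0, hn'⟩ : Fin (k' + 1)) = 0 := rfl
      have e2 : (⟨0, hn⟩ : Fin (k + 1)) = 0 := rfl
      rw [e1, e2, hV0', hV0]
    | succ n ihn =>
      intro hn' hn
      have hnk' : n < k' := by omega
      have hnk : n < k := by omega
      have hcast : Vs' (Fin.castSucc ⟨n, hnk'⟩) = Vs (Fin.castSucc ⟨n, hnk⟩) :=
        ihn (Nat.lt_succ_of_lt hnk') (Nat.lt_succ_of_lt hnk)
      have hBeq : B' ⟨n, hnk'⟩ = B ⟨n, hnk⟩ := by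
        apply (hconds ⟨n, hnk⟩).2.2.2.1
        rw [← hcast]
        exact (hconds' ⟨n, hnk'⟩).2.2.1
      have hCeq : C' ⟨n, hnk'⟩ = C ⟨n, hnk⟩ := by
        rw [(hconds' ⟨n, hnk'⟩).2.2.2.2, (hconds ⟨n, hnk⟩).2.2.2.2, hcast, hBeq]
      have e1 : (⟨n + 1, hn'⟩ : Fin (k' + 1)) = Fin.succ ⟨n, hnk'⟩ := rfl
      have e2 : (⟨n + 1, hn⟩ : Fin (k + 1)) = Fin.succ ⟨n, hnk⟩ := rfl
      rw [e1, e2, hVrec' ⟨n, hnk'⟩, hVrec ⟨n, hnk⟩, hcast, hBeq, hCeq]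
  have hkk : k' = k := by
    by_contra hne
    rcases Nat.lt_or_ge k' k with h | h
    · have h1 := agree k' (Nat.lt_succ_self k') (Nat.lt_succ_of_lt h)
      have h2 := (hconds ⟨k', h⟩).1
      have e1 : (⟨k', Nat.lt_succ_of_lt h⟩ : Fin (k + 1)) = Fin.castSucc ⟨k', h⟩ := rfl
      have e2 : (⟨k', Nat.lt_succ_self k'⟩ : Fin (k' + 1)) = Fin.last k' := rfl
      rw [e1, e2, hVlast'] at h1
      rw [← h1] at h2
      exact absurd h2 (by simp)
    · have h : k < k' := by omega
      have h1 := agree k (Nat.lt_succ_of_lt h) (Nat.lt_succ_self k)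
      have h2 := (hconds' ⟨k, h⟩).1
      have e1 : (⟨k, Nat.lt_succ_of_lt h⟩ : Fin (k' + 1)) = Fin.castSucc ⟨k, h⟩ := rfl
      have e2 : (⟨k, Nat.lt_succ_self k⟩ : Fin (k + 1)) = Fin.last k := rfl
      rw [e1, e2, hVlast] at h1
      rw [h1] at h2
      exact absurd h2 (by simp)
  subst hkk
  have hBeq : ∀ i : Fin k', B' i = B i := by
    intro i
    have hcast : Vs' (Fin.castSucc ⟨i.val, i.isLt⟩) = Vs (Fin.castSucc ⟨i.val, i.isLt⟩) :=
      agree i.val (Nat.lt_succ_of_lt i.isLt) (Nat.lt_succ_of_lt i.isLt)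
    have hi : (⟨i.val, i.isLt⟩ : Fin k') = i := rfl
    rw [hi] at hcast
    apply (hconds i).2.2.2.1
    rw [← hcast]
    exact (hconds' i).2.2.1
  have hCeq : ∀ i : Fin k', C' i = C i := by
    intro i
    have hcast : Vs' (Fin.castSucc ⟨i.val, i.isLt⟩) = Vs (Fin.castSucc ⟨i.val, i.isLt⟩) :=
      agree i.val (Nat.lt_succ_of_lt i.isLt) (Nat.lt_succ_of_lt i.isLt)
    have hi : (⟨i.val, i.isLt⟩ : Fin k') = i := rfl
    rw [hi] at hcast
    rw [(hconds' i).2.2.2.2, (hconds i).2.2.2.2, hcast, hBeq i]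
  obtain rfl : B' = B := funext hBeq
  obtain rfl : C' = C := funext hCeq
  rfl
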